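/- A finite tree T is a caterpillar if and only if T does not contain, as a subgraph, the tree obtained from the star K_{1,3} by subdividing each of its three edges exactly once (i.e., the spider with three legs of length 2). -/

import Mathlib

open SimpleGraph Walk

section Helpers
variable {V : Type*} {G : SimpleGraph V}

private lemma walk_eq' (h : G.IsAcyclic) {a b : V} (p q : G.Walk a b)
    (hp : p.IsPath) (hq : q.IsPath) : p = q :=
  congrArg Subtype.val (h.path_unique ⟨p, hp⟩ ⟨q, hq⟩)

private lemma adj_unique_len (h : G.IsAcyclic) {a d : V} (had : G.Adj a d)
    (q : G.Walk a d) (hq : q.IsPath) : q.length = 1 := by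
  have he : (Walk.cons had Walk.nil).IsPath := by
    simp [Walk.isPath_def, had.ne]
  rw [walk_eq' h q (Walk.cons had Walk.nil) hq he]
  simp

private lemma not_adj_of_path (h : G.IsAcyclic) {a d : V} (q : G.Walk a d)
    (hq : q.IsPath) (hlen : q.length ≠ 1) : ¬ G.Adj a d :=
  fun had => hlen (adj_unique_len h had q hq)

private lemma isPath3 {a b c : V} (h1 : G.Adj a b) (h2 : G.Adj b c) (hac : a ≠ c) :
    (Walk.cons h1 (Walk.cons h2 Walk.nil)).IsPath := by
  simp [Walk.isPath_def, h1.ne, h2.ne, hac]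

private lemma isPath4 {a b c d : V} (h1 : G.Adj a b) (h2 : G.Adj b c) (h3 : G.Adj c d)
    (hac : a ≠ c) (had : a ≠ d) (hbd : b ≠ d) :
    (Walk.cons h1 (Walk.cons h2 (Walk.cons h3 Walk.nil))).IsPath := by
  simp [Walk.isPath_def, h1.ne, h2.ne, h3.ne, hac, had, hbd]

private lemma isPath5 {a b c d e : V} (h1 : G.Adj a b) (h2 : G.Adj b c) (h3 : G.Adj c d)
    (h4 : G.Adj d e) (hac : a ≠ c) (had : a ≠ d) (hae : a ≠ e) (hbd : b ≠ d)
    (hbe : b ≠ e) (hce : c ≠ e) :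
    (Walk.cons h1 (Walk.cons h2 (Walk.cons h3 (Walk.cons h4 Walk.nil)))).IsPath := by
  simp [Walk.isPath_def, h1.ne, h2.ne, h3.ne, h4.ne, hac, had, hae, hbd, hbe, hce]

/-- Within a path, between any two support vertices there is a path staying in the support. -/
private lemma exists_subpath [DecidableEq V] {u v x y : V} (p : G.Walk u v) (hp : p.IsPath)
    (hx : x ∈ p.support) (hy : y ∈ p.support) :
    ∃ q : G.Walk x y, q.IsPath ∧ ∀ z ∈ q.support, z ∈ p.support := by
  rw [← Walk.take_spec p hx, Walk.mem_support_append_iff] at hy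
  rcases hy with hy | hy
  · exact ⟨((p.takeUntil x hx).dropUntil y hy).reverse,
      ((hp.takeUntil hx).dropUntil hy).reverse,
      fun z hz => Walk.support_takeUntil_subset p hx
        (Walk.support_dropUntil_subset _ hy (by rwa [Walk.support_reverse, List.mem_reverse] at hz))⟩
  · exact ⟨(p.dropUntil x hx).takeUntil y hy, (hp.dropUntil hx).takeUntil hy,
      fun z hz => Walk.support_dropUntil_subset p hx
        (Walk.support_takeUntil_subset _ hy hz)⟩

private lemma exists_two_step {V : Type*} {G : SimpleGraph V} {x s : V} (e : G.Walk x s)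
    (h : 2 ≤ e.length) :
    ∃ (b b' : V) (hxb : G.Adj x b) (hbb' : G.Adj b b') (e₂ : G.Walk b' s),
      e = Walk.cons hxb (Walk.cons hbb' e₂) := by
  cases e with
  | nil => simp at h
  | cons h1 e1 =>
    cases e1 with
    | nil => simp at h
    | cons h2 e2 => exact ⟨_, _, h1, h2, e2, rfl⟩

private lemma slotT [DecidableEq V] (hA : G.IsAcyclic) {u c wi wj : V} (t : G.Walk u c)
    (ht : t.IsPath) (hwi : wi ∈ t.support) (hwj : wj ∈ t.support)
    (hne : wi ≠ wj) (hic : G.Adj wi c) (hjc : G.Adj wj c) : False := by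
  have h1 : (t.dropUntil wi hwi) = Walk.cons hic Walk.nil :=
    walk_eq' hA _ _ (ht.dropUntil hwi) (by simp [Walk.isPath_def, hic.ne])
  have hsp : t.support = (t.takeUntil wi hwi).support ++ (t.dropUntil wi hwi).support.tail := by
    conv_lhs => rw [← Walk.take_spec t hwi]
    rw [Walk.support_append]
  have htl : (t.dropUntil wi hwi).support.tail = [c] := by rw [h1]; rfl
  have hwj' : wj ∈ (t.takeUntil wi hwi).support := by
    have h := hwj
    rw [hsp, List.mem_append, htl] at h
    rcases h with h | h
    · exact h
    · simp at h; exact absurd h hjc.ne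
  have hcnot : c ∉ (t.takeUntil wi hwi).support := by
    have hnd := ht.support_nodup
    rw [hsp] at hnd
    have hdis := (List.nodup_append'.mp hnd).2.2
    intro hcm
    exact hdis hcm (by rw [htl]; simp)
  have h2 : ((t.takeUntil wi hwi).dropUntil wj hwj') =
      Walk.cons hjc (Walk.cons hic.symm Walk.nil) :=
    walk_eq' hA _ _ ((ht.takeUntil hwi).dropUntil hwj') (isPath3 hjc hic.symm hne.symm)
  have hcmem : c ∈ ((t.takeUntil wi hwi).dropUntil wj hwj').support := by rw [h2]; simp
  exact hcnot (Walk.support_dropUntil_subset _ hwj' hcmem)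

private lemma slotD [DecidableEq V] (hA : G.IsAcyclic) {c v wi wj : V} (d : G.Walk c v)
    (hd : d.IsPath) (hwi : wi ∈ d.support.tail) (hwj : wj ∈ d.support.tail)
    (hne : wi ≠ wj) (hic : G.Adj wi c) (hjc : G.Adj wj c) : False := by
  have hwi' : wi ∈ d.support := List.mem_of_mem_tail hwi
  have h1 : d.takeUntil wi hwi' = Walk.cons hic.symm Walk.nil :=
    walk_eq' hA _ _ (hd.takeUntil hwi') (by simp [Walk.isPath_def, hic.ne.symm])
  have hsp : d.support = (d.takeUntil wi hwi').support ++ (d.dropUntil wi hwi').support.tail := by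
    conv_lhs => rw [← Walk.take_spec d hwi']
    rw [Walk.support_append]
  have hts : (d.takeUntil wi hwi').support = [c, wi] := by rw [h1]; rfl
  have hcnd : c ∉ (d.dropUntil wi hwi').support := by
    have hnd := hd.support_nodup
    rw [hsp] at hnd
    have hdis := (List.nodup_append'.mp hnd).2.2
    intro hcm
    rw [Walk.support_eq_cons, List.mem_cons] at hcm
    rcases hcm with hcm | hcm
    · exact hic.ne.symm hcm
    · exact hdis (by rw [hts]; simp) hcm
  have hwj' : wj ∈ (d.dropUntil wi hwi').support := by
    have h := List.mem_of_mem_tail hwj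
    rw [hsp, List.mem_append] at h
    rcases h with h | h
    · rw [hts] at h; simp at h
      rcases h with h | h
      · exact absurd h hjc.ne
      · exact absurd h hne.symm
    · exact List.mem_of_mem_tail h
  have h2 : (d.dropUntil wi hwi').takeUntil wj hwj' =
      Walk.cons hic (Walk.cons hjc.symm Walk.nil) :=
    walk_eq' hA _ _ ((hd.dropUntil hwi').takeUntil hwj') (isPath3 hic hjc.symm hne)
  have hcmem : c ∈ ((d.dropUntil wi hwi').takeUntil wj hwj').support := by rw [h2]; simp
  exact hcnd (Walk.support_takeUntil_subset _ hwj' hcmem)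

end Helpers

theorem stmt11 {V : Type*} [Fintype V] (G : SimpleGraph V) (hT : G.IsTree) :
    (∃ (u v : V) (p : G.Walk u v), p.IsPath ∧
        ∀ w : V, w ∈ p.support ∨ ∃ x ∈ p.support, G.Adj w x) ↔
      ¬ ∃ c w₁ w₂ w₃ x₁ x₂ x₃ : V,
          ([c, w₁, w₂, w₃, x₁, x₂, x₃] : List V).Nodup ∧
          G.Adj c w₁ ∧ G.Adj c w₂ ∧ G.Adj c w₃ ∧
          G.Adj w₁ x₁ ∧ G.Adj w₂ x₂ ∧ G.Adj w₃ x₃ := by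
  classical
  have hA : G.IsAcyclic := hT.IsAcyclic
  constructor
  · rintro ⟨u, v, p, hp, hdom⟩ ⟨c, w₁, w₂, w₃, x₁, x₂, x₃, hnd, hc1, hc2, hc3, h1, h2, h3⟩
    simp only [List.nodup_cons, List.mem_cons, List.not_mem_nil, or_false, not_or,
      List.nodup_nil, and_true, List.mem_singleton] at hnd
    obtain ⟨⟨hcw1, hcw2, hcw3, hcx1, hcx2, hcx3⟩, ⟨hw12, hw13, hw1x1, hw1x2, hw1x3⟩,
      ⟨hw23, hw2x1, hw2x2, hw2x3⟩, ⟨hw3x1, hw3x2, hw3x3⟩, ⟨hx12, hx13⟩, hx23⟩ := hnd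
    have ne' : ∀ {a b : V}, ¬ a = b → b ≠ a := fun h hh => h hh.symm
    -- non-adjacency facts from acyclicity
    have nadj_cx1 : ¬ G.Adj c x₁ :=
      not_adj_of_path hA (Walk.cons hc1 (Walk.cons h1 Walk.nil)) (isPath3 hc1 h1 hcx1) (by simp)
    have nadj_cx2 : ¬ G.Adj c x₂ :=
      not_adj_of_path hA (Walk.cons hc2 (Walk.cons h2 Walk.nil)) (isPath3 hc2 h2 hcx2) (by simp)
    have nadj_cx3 : ¬ G.Adj c x₃ :=
      not_adj_of_path hA (Walk.cons hc3 (Walk.cons h3 Walk.nil)) (isPath3 hc3 h3 hcx3) (by simp)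
    have nadj_x1w2 : ¬ G.Adj x₁ w₂ :=
      not_adj_of_path hA (Walk.cons h1.symm (Walk.cons hc1.symm (Walk.cons hc2 Walk.nil)))
        (isPath4 h1.symm hc1.symm hc2 (ne' hcx1) (ne' hw2x1) hw12) (by simp)
    have nadj_x2w1 : ¬ G.Adj x₂ w₁ :=
      not_adj_of_path hA (Walk.cons h2.symm (Walk.cons hc2.symm (Walk.cons hc1 Walk.nil)))
        (isPath4 h2.symm hc2.symm hc1 (ne' hcx2) (ne' hw1x2) (ne' hw12)) (by simp)
    have nadj_x1w3 : ¬ G.Adj x₁ w₃ :=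
      not_adj_of_path hA (Walk.cons h1.symm (Walk.cons hc1.symm (Walk.cons hc3 Walk.nil)))
        (isPath4 h1.symm hc1.symm hc3 (ne' hcx1) (ne' hw3x1) hw13) (by simp)
    have nadj_x3w1 : ¬ G.Adj x₃ w₁ :=
      not_adj_of_path hA (Walk.cons h3.symm (Walk.cons hc3.symm (Walk.cons hc1 Walk.nil)))
        (isPath4 h3.symm hc3.symm hc1 (ne' hcx3) (ne' hw1x3) (ne' hw13)) (by simp)
    have nadj_x1x2 : ¬ G.Adj x₁ x₂ :=
      not_adj_of_path hA
        (Walk.cons h1.symm (Walk.cons hc1.symm (Walk.cons hc2 (Walk.cons h2 Walk.nil))))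
        (isPath5 h1.symm hc1.symm hc2 h2 (ne' hcx1) (ne' hw2x1) hx12 hw12 hw1x2 hcx2) (by simp)
    have nadj_x1x3 : ¬ G.Adj x₁ x₃ :=
      not_adj_of_path hA
        (Walk.cons h1.symm (Walk.cons hc1.symm (Walk.cons hc3 (Walk.cons h3 Walk.nil))))
        (isPath5 h1.symm hc1.symm hc3 h3 (ne' hcx1) (ne' hw3x1) hx13 hw13 hw1x3 hcx3) (by simp)
    -- for each leg, a path from c to a support vertex of p through wᵢ
    have branch : ∀ (wi xi : V), G.Adj c wi → G.Adj wi xi → c ≠ xi → ¬ G.Adj c xi →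
        (xi ∈ p.support ∨ ∃ x ∈ p.support, G.Adj xi x) →
        ∃ (yi : V) (P : G.Walk c yi), P.IsPath ∧ yi ∈ p.support ∧ wi ∈ P.support ∧
          (∀ s ∈ P.support, s = c ∨ s = wi ∨ s = xi ∨ s = yi) ∧
          (yi = xi ∨ G.Adj xi yi) := by
      intro wi xi hcw hwx hcx hncx hdomi
      rcases hdomi with hxi | ⟨yy, hyy, hadj⟩
      · refine ⟨xi, Walk.cons hcw (Walk.cons hwx Walk.nil), isPath3 hcw hwx hcx, hxi,
          by simp, ?_, Or.inl rfl⟩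
        intro s hs
        simp at hs
        tauto
      · by_cases hyc : yy = c
        · exact absurd (hyc ▸ hadj).symm hncx
        by_cases hyw : yy = wi
        · subst hyw
          refine ⟨yy, Walk.cons hcw Walk.nil, by simp [Walk.isPath_def, hcw.ne], hyy,
            by simp, ?_, Or.inr hadj⟩
          intro s hs
          simp at hs
          tauto
        by_cases hyx : yy = xi
        · subst hyx
          refine ⟨yy, Walk.cons hcw (Walk.cons hwx Walk.nil), isPath3 hcw hwx hcx, hyy,
            by simp, ?_, Or.inl rfl⟩
          intro s hs
          simp at hs
          tauto
        · refine ⟨yy, Walk.cons hcw (Walk.cons hwx (Walk.cons hadj Walk.nil)),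
            isPath4 hcw hwx hadj hcx (fun hh => hyc hh.symm) (fun hh => hyw hh.symm), hyy,
            by simp, ?_, Or.inr hadj⟩
          intro s hs
          simp at hs
          tauto
    -- combining two legs: both wi, wj and c lie on p
    have pair : ∀ (wi xi wj xj : V), G.Adj c wi → G.Adj wi xi → G.Adj c wj → G.Adj wj xj →
        ¬ G.Adj xi wj → ¬ G.Adj xj wi → ¬ G.Adj xi xj →
        ¬ G.Adj c xi → ¬ G.Adj c xj →
        c ≠ xi → c ≠ xj → wi ≠ wj → wi ≠ xj → xi ≠ wj → xi ≠ xj →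
        (xi ∈ p.support ∨ ∃ x ∈ p.support, G.Adj xi x) →
        (xj ∈ p.support ∨ ∃ x ∈ p.support, G.Adj xj x) →
        wi ∈ p.support ∧ wj ∈ p.support ∧ c ∈ p.support := by
      intro wi xi wj xj hcwi hwxi hcwj hwxj nxiwj nxjwi nxixj ncxi ncxj
        hecxi hecxj hewiwj hewixj hexiwj hexixj hdi hdj
      obtain ⟨yi, Pi, hPi, hyi, hwiPi, hPis, hydi⟩ := branch wi xi hcwi hwxi hecxi ncxi hdi
      obtain ⟨yj, Pj, hPj, hyj, hwjPj, hPjs, hydj⟩ := branch wj xj hcwj hwxj hecxj ncxj hdj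
      have hwyj : wi ≠ yj := by
        intro hh
        rcases hydj with hh2 | hadjj
        · exact hewixj (hh.trans hh2)
        · rw [← hh] at hadjj
          exact nxjwi hadjj
      have hxyj : xi ≠ yj := by
        intro hh
        rcases hydj with hh2 | hadjj
        · exact hexixj (hh.trans hh2)
        · rw [← hh] at hadjj
          exact nxixj hadjj.symm
      have hwyi : wj ≠ yi := by
        intro hh
        rcases hydi with hh2 | hadji
        · exact hexiwj (hh.trans hh2).symm
        · rw [← hh] at hadji
          exact nxiwj hadji
      have hxyi : xj ≠ yi := by
        intro hh
        rcases hydi with hh2 | hadji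
        · exact hexixj (hh.trans hh2).symm
        · rw [← hh] at hadji
          exact nxixj hadji
      have hyic : yi ≠ c := by
        rcases hydi with rfl | hadji
        · exact fun hh => hecxi hh.symm
        · exact fun hh => ncxi ((hh ▸ hadji).symm)
      have hyjc : yj ≠ c := by
        rcases hydj with rfl | hadjj
        · exact fun hh => hecxj hh.symm
        · exact fun hh => ncxj ((hh ▸ hadjj).symm)
      have hyy : yi ≠ yj := by
        intro hh
        rcases hydi with rfl | hadji
        · exact hxyj hh
        rcases hydj with rfl | hadjj
        · exact hxyi hh.symm
        by_cases hyiwi : yi = wi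
        · exact hwyj (hyiwi ▸ hh)
        by_cases hyjwj : yj = wj
        · exact hwyi ((hh.trans hyjwj).symm)
        subst hh
        have hQ1 : (Walk.cons hadji.symm (Walk.cons hwxi.symm
            (Walk.cons hcwi.symm Walk.nil))).IsPath :=
          isPath4 hadji.symm hwxi.symm hcwi.symm (fun hg => hyiwi hg) hyic
            (fun hg => hecxi hg.symm)
        have hQ2 : (Walk.cons hadjj.symm (Walk.cons hwxj.symm
            (Walk.cons hcwj.symm Walk.nil))).IsPath :=
          isPath4 hadjj.symm hwxj.symm hcwj.symm (fun hg => hyjwj hg) hyic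
            (fun hg => hecxj hg.symm)
        have heq := walk_eq' hA _ _ hQ1 hQ2
        have := congrArg Walk.support heq
        simp at this
        exact hexixj this.1
      have hdisj : ∀ s, s ∈ Pi.support → s ∈ Pj.support → s = c := by
        intro s hsi hsj
        rcases hPis s hsi with rfl | rfl | rfl | rfl
        · rfl
        · rcases hPjs _ hsj with hg | hg | hg | hg
          · exact absurd hg hcwi.ne.symm
          · exact absurd hg hewiwj
          · exact absurd hg hewixj
          · exact absurd hg hwyj
        · rcases hPjs _ hsj with hg | hg | hg | hg
          · exact absurd hg (fun hh => hecxi hh.symm)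
          · exact absurd hg hexiwj
          · exact absurd hg hexixj
          · exact absurd hg hxyj
        · rcases hPjs _ hsj with hg | hg | hg | hg
          · exact absurd hg hyic
          · exact absurd hg (fun hh => hwyi hh.symm)
          · exact absurd hg (fun hh => hxyi hh.symm)
          · exact absurd hg hyy
      have hctl : c ∉ Pj.support.tail := by
        have hnd2 := hPj.support_nodup
        rw [Walk.support_eq_cons] at hnd2
        exact (List.nodup_cons.mp hnd2).1
      have hQ : (Pi.reverse.append Pj).IsPath := by
        rw [Walk.isPath_def, Walk.support_append, List.nodup_append']
        have htlnd : Pj.support.tail.Nodup := by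
          have hnd2 := hPj.support_nodup
          rw [Walk.support_eq_cons] at hnd2
          exact (List.nodup_cons.mp hnd2).2
        refine ⟨by rw [Walk.support_reverse]; exact List.nodup_reverse.mpr hPi.support_nodup,
          htlnd, ?_⟩
        intro s hs hs'
        have hm1 : s ∈ Pi.support := by rwa [Walk.support_reverse, List.mem_reverse] at hs
        have hm2 : s ∈ Pj.support := List.mem_of_mem_tail hs'
        have hsc := hdisj s hm1 hm2
        subst hsc
        exact hctl hs'
      obtain ⟨q, hq, hqs⟩ := exists_subpath p hp hyi hyj
      have heq := walk_eq' hA (Pi.reverse.append Pj) q hQ hq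
      have hsub : ∀ s ∈ (Pi.reverse.append Pj).support, s ∈ p.support := by
        rw [heq]; exact hqs
      refine ⟨hsub wi ?_, hsub wj ?_, hsub c ?_⟩
      · rw [Walk.mem_support_append_iff]
        left
        rwa [Walk.support_reverse, List.mem_reverse]
      · rw [Walk.mem_support_append_iff]
        right
        exact hwjPj
      · rw [Walk.mem_support_append_iff]
        left
        rw [Walk.support_reverse, List.mem_reverse]
        exact Pi.start_mem_support
    obtain ⟨hw1p, hw2p, hcp⟩ := pair w₁ x₁ w₂ x₂ hc1 h1 hc2 h2 nadj_x1w2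
      (fun hh => nadj_x2w1 hh) nadj_x1x2 nadj_cx1 nadj_cx2 hcx1 hcx2 hw12 hw1x2
      (ne' hw2x1) hx12 (hdom x₁) (hdom x₂)
    obtain ⟨-, hw3p, -⟩ := pair w₁ x₁ w₃ x₃ hc1 h1 hc3 h3 nadj_x1w3
      (fun hh => nadj_x3w1 hh) nadj_x1x3 nadj_cx1 nadj_cx3 hcx1 hcx3 hw13 hw1x3
      (ne' hw3x1) hx13 (hdom x₁) (hdom x₃)
    -- final pigeonhole on the two sides of c along p
    have hsp' : p.support = (p.takeUntil c hcp).support ++ (p.dropUntil c hcp).support.tail := by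
      conv_lhs => rw [← Walk.take_spec p hcp]
      rw [Walk.support_append]
    have hslot : ∀ {x : V}, x ∈ p.support →
        x ∈ (p.takeUntil c hcp).support ∨ x ∈ (p.dropUntil c hcp).support.tail := by
      intro x hx
      rwa [hsp', List.mem_append] at hx
    have htP := hp.takeUntil hcp
    have hdP := hp.dropUntil hcp
    rcases hslot hw1p with a1 | b1 <;> rcases hslot hw2p with a2 | b2 <;>
      rcases hslot hw3p with a3 | b3
    · exact slotT hA _ htP a1 a2 hw12 hc1.symm hc2.symm
    · exact slotT hA _ htP a1 a2 hw12 hc1.symm hc2.symm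
    · exact slotT hA _ htP a1 a3 hw13 hc1.symm hc3.symm
    · exact slotD hA _ hdP b2 b3 hw23 hc2.symm hc3.symm
    · exact slotT hA _ htP a2 a3 hw23 hc2.symm hc3.symm
    · exact slotD hA _ hdP b1 b3 hw13 hc1.symm hc3.symm
    · exact slotD hA _ hdP b1 b2 hw12 hc1.symm hc2.symm
    · exact slotD hA _ hdP b1 b2 hw12 hc1.symm hc2.symm
  · intro hns
    obtain ⟨w0⟩ := hT.isConnected.nonempty
    set N := Fintype.card V with hN
    set P : ℕ → Prop := fun n => ∃ (a b : V) (q : G.Walk a b), q.IsPath ∧ q.length = n with hP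
    have h0 : P 0 := ⟨w0, w0, Walk.nil, Walk.IsPath.nil, rfl⟩
    have hM : P (Nat.findGreatest P N) := Nat.findGreatest_spec (Nat.zero_le N) h0
    obtain ⟨u, v, p, hp, hplen⟩ := hM
    have hmax : ∀ {a b : V} (q : G.Walk a b), q.IsPath → q.length ≤ p.length := by
      intro a b q hq
      rw [hplen]
      exact Nat.le_findGreatest (le_of_lt hq.length_lt) ⟨a, b, q, hq, rfl⟩
    refine ⟨u, v, p, hp, ?_⟩
    intro w
    by_contra hw
    push_neg at hw
    obtain ⟨hwp, hwadj⟩ := hw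
    have escape : ∀ (S : Set V) {a e : V} (q : G.Walk a e), e ∈ S → a ∉ S →
        ∃ y z, y ∉ S ∧ z ∈ S ∧ G.Adj y z ∧
          (y = a ∨ ∃ y', y' ∉ S ∧ G.Adj y' y) := by
      intro S a e q
      induction q with
      | nil => intro he ha; exact absurd he ha
      | @cons a b uu h q ih =>
        intro he ha
        by_cases hb : b ∈ S
        · exact ⟨a, b, ha, hb, h, Or.inl rfl⟩
        · obtain ⟨y, z, hy, hz, hyz, hor⟩ := ih he hb
          refine ⟨y, z, hy, hz, hyz, Or.inr ?_⟩
          rcases hor with rfl | ⟨y', hy', hy'y⟩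
          · exact ⟨a, ha, h⟩
          · exact ⟨y', hy', hy'y⟩
    obtain ⟨q0⟩ := hT.isConnected w u
    obtain ⟨y, z, hy, hz, hyz, hor⟩ :=
      escape {x | x ∈ p.support} q0 p.start_mem_support hwp
    rcases hor with rfl | ⟨y', hy', hy'y⟩
    · exact hwadj z hz hyz
    have hzy : G.Adj z y := hyz.symm
    have hyy' : G.Adj y y' := hy'y.symm
    have grow : ∀ {s : V} (r : G.Walk s z), r.IsPath → (∀ x ∈ r.support, x ∈ p.support) →
        r.length + 2 ≤ p.length := by
      intro s r hr hsub
      have hyr : y ∉ r.support := fun hh => hy (hsub y hh)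
      have hy'r : y' ∉ r.support := fun hh => hy' (hsub y' hh)
      have hq : ((r.concat hzy).concat hyy').IsPath := by
        rw [Walk.isPath_def, Walk.support_concat, Walk.support_concat]
        have hnd2 : (r.support ++ [y, y']).Nodup := by
          rw [List.nodup_append']
          refine ⟨hr.support_nodup, by simp [hyy'.ne], ?_⟩
          intro x hx hx'
          simp only [List.mem_cons, List.mem_singleton, List.not_mem_nil, or_false] at hx'
          rcases hx' with rfl | rfl
          · exact hyr hx
          · exact hy'r hx
        simpa [List.concat_eq_append, List.append_assoc] using hnd2
      have := hmax _ hq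
      simp [Walk.length_concat] at this; omega
    set t := p.takeUntil z hz with htdef
    set d := p.dropUntil z hz with hddef
    have hlen2 : p.length = t.length + d.length := by
      conv_lhs => rw [← Walk.take_spec p hz]
      rw [Walk.length_append]
    have hz2 : 2 ≤ d.length := by
      have := grow t (hp.takeUntil hz) (fun x hx => Walk.support_takeUntil_subset p hz hx)
      omega
    have ht2 : 2 ≤ t.length := by
      have := grow d.reverse ((hp.dropUntil hz).reverse)
        (fun x hx => Walk.support_dropUntil_subset p hz
          (by rwa [Walk.support_reverse, List.mem_reverse] at hx))
      rw [Walk.length_reverse] at this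
      omega
    obtain ⟨b, b', hzb, hbb', d₂, hd⟩ := exists_two_step d hz2
    obtain ⟨a, a', hza, haa', e₂, he⟩ := exists_two_step t.reverse
      (by rwa [Walk.length_reverse])
    -- support facts for the t-side
    have hsupt : t.reverse.support = z :: a :: e₂.support := by
      rw [he]; simp
    have hndt : (z :: a :: e₂.support).Nodup := by
      rw [← hsupt]
      exact ((hp.takeUntil hz).reverse).support_nodup
    have ha'e : a' ∈ e₂.support := e₂.start_mem_support
    have hat : a ∈ t.support := by
      rw [← List.mem_reverse, ← Walk.support_reverse, hsupt]; simp
    have ha't : a' ∈ t.support := by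
      rw [← List.mem_reverse, ← Walk.support_reverse, hsupt]; simp [ha'e]
    have hza_ne : z ≠ a := by
      intro hh; exact (List.nodup_cons.mp hndt).1 (by simp [hh])
    have hza'_ne : z ≠ a' := fun hh =>
      (List.nodup_cons.mp hndt).1 (List.mem_cons.mpr (Or.inr (by rw [hh]; exact ha'e)))
    have haa'_ne : a ≠ a' := by
      intro hh
      exact (List.nodup_cons.mp (List.nodup_cons.mp hndt).2).1 (hh ▸ ha'e)
    -- support facts for the d-side
    have hsupd : d.support = z :: b :: d₂.support := by
      rw [hd]; simp
    have hndd : (z :: b :: d₂.support).Nodup := by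
      rw [← hsupd]
      exact (hp.dropUntil hz).support_nodup
    have hb'd : b' ∈ d₂.support := d₂.start_mem_support
    have hbtl : b ∈ d.support.tail := by rw [hsupd]; simp
    have hb'tl : b' ∈ d.support.tail := by rw [hsupd]; simp [hb'd]
    have hzb_ne : z ≠ b := by
      intro hh; exact (List.nodup_cons.mp hndd).1 (by simp [hh])
    have hzb'_ne : z ≠ b' := fun hh =>
      (List.nodup_cons.mp hndd).1 (List.mem_cons.mpr (Or.inr (by rw [hh]; exact hb'd)))
    have hbb'_ne : b ≠ b' := by
      intro hh
      exact (List.nodup_cons.mp (List.nodup_cons.mp hndd).2).1 (hh ▸ hb'd)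
    -- disjointness of the two sides
    have hsp : p.support = t.support ++ d.support.tail := by
      conv_lhs => rw [← Walk.take_spec p hz]
      rw [Walk.support_append]
    have hnds : (t.support ++ d.support.tail).Nodup := by
      rw [← hsp]; exact hp.support_nodup
    have hdisj : List.Disjoint t.support d.support.tail := (List.nodup_append'.mp hnds).2.2
    have hab_ne : a ≠ b := fun hh => hdisj hat (hh ▸ hbtl)
    have hab'_ne : a ≠ b' := fun hh => hdisj hat (hh ▸ hb'tl)
    have ha'b_ne : a' ≠ b := fun hh => hdisj ha't (hh ▸ hbtl)
    have ha'b'_ne : a' ≠ b' := fun hh => hdisj ha't (hh ▸ hb'tl)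
    -- membership in p.support
    have hap : a ∈ p.support := Walk.support_takeUntil_subset p hz hat
    have ha'p : a' ∈ p.support := Walk.support_takeUntil_subset p hz ha't
    have hbp : b ∈ p.support := Walk.support_dropUntil_subset p hz (by rw [hsupd]; simp)
    have hb'p : b' ∈ p.support := Walk.support_dropUntil_subset p hz (by rw [hsupd]; simp [hb'd])
    have hyne : ∀ x ∈ p.support, y ≠ x := fun x hx hh => hy (hh ▸ hx)
    have hy'ne : ∀ x ∈ p.support, y' ≠ x := fun x hx hh => hy' (hh ▸ hx)
    refine hns ⟨z, a, b, y, a', b', y', ?_, hza, hzb, hzy, haa', hbb', hyy'⟩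
    have l1 := hyne z hz
    have l2 := hyne a hap
    have l3 := hyne b hbp
    have l4 := hyne a' ha'p
    have l5 := hyne b' hb'p
    have l6 := hy'ne z hz
    have l7 := hy'ne a hap
    have l8 := hy'ne b hbp
    have l9 := hy'ne a' ha'p
    have l10 := hy'ne b' hb'p
    have l11 : y ≠ y' := hyy'.ne
    simp [List.nodup_cons, hza_ne, hzb_ne, l1.symm, hza'_ne, hzb'_ne, l6.symm,
      hab_ne, l2.symm, haa'_ne, hab'_ne, l7.symm, l3.symm, ha'b_ne.symm, hbb'_ne,
      l8.symm, l4, l5, l11, ha'b'_ne, l9.symm, l10.symm]
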